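/- The topological group 2^ω, the product of countably many copies of the two-element discrete group ℤ/2ℤ with the product topology, is not topologically isomorphic to any subgroup of H(ω*), the group of self-homeomorphisms of ω* = βω \ ω with the compact-open topology. -/

import Mathlib

open Set Topology TopologicalSpace

/-- The compact-open topology on the group of self-homeomorphisms of a space:
the topology induced from the compact-open topology on `C(X, X)`. -/
instance homeomorphCompactOpen (X : Type*) [TopologicalSpace X] :
    TopologicalSpace (X ≃ₜ X) :=
  TopologicalSpace.induced (fun h : X ≃ₜ X => (h : C(X, X))) ContinuousMap.compactOpen

/-- The group of self-homeomorphisms of a space, under composition. -/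
instance homeomorphGroup (X : Type*) [TopologicalSpace X] : Group (X ≃ₜ X) where
  mul f g := g.trans f
  one := Homeomorph.refl X
  inv := Homeomorph.symm
  mul_assoc _ _ _ := Homeomorph.ext fun _ => rfl
  one_mul _ := Homeomorph.ext fun _ => rfl
  mul_one _ := Homeomorph.ext fun _ => rfl
  inv_mul_cancel f := Homeomorph.ext fun x => f.symm_apply_apply x

/-- The weight of a topological space: the least cardinality of a base of its topology. -/
noncomputable def TopologicalSpace.weight (X : Type u) [TopologicalSpace X] : Cardinal.{u} :=
  ⨅ B : {B : Set (Set X) // TopologicalSpace.IsTopologicalBasis B}, Cardinal.mk B.1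

/-- A set is an Fσ-set if it is a countable union of closed sets. -/
def IsFsigma {X : Type*} [TopologicalSpace X] (s : Set X) : Prop :=
  ∃ F : ℕ → Set X, (∀ n, IsClosed (F n)) ∧ s = ⋃ n, F n

/-- An F-space (for normal spaces): disjoint open Fσ-sets have disjoint closures. -/
def IsFSpace (X : Type*) [TopologicalSpace X] : Prop :=
  ∀ U V : Set X, IsOpen U → IsOpen V → IsFsigma U → IsFsigma V → Disjoint U V →
    Disjoint (closure U) (closure V)

/-- A Parovičenko space: a compact zero-dimensional F-space of weight `𝔠` in which
every nonempty Gδ-set has infinite interior. -/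
structure IsParovicenko (X : Type u) [TopologicalSpace X] : Prop where
  compact : CompactSpace X
  t2 : T2Space X
  zeroDim : TopologicalSpace.IsTopologicalBasis {s : Set X | IsClopen s}
  fSpace : IsFSpace X
  weight_eq : TopologicalSpace.weight X = Cardinal.continuum
  gdelta_int : ∀ s : Set X, IsGδ s → s.Nonempty → (interior s).Infinite

/-- The Gδ-modification of a topology: the topology generated by the Gδ-sets. -/
def gdeltaMod {X : Type*} (t : TopologicalSpace X) : TopologicalSpace X :=
  TopologicalSpace.generateFrom {s : Set X | @IsGδ X t s}

/-- The Čech–Stone remainder `βα \ α` of a space `α`. -/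
abbrev CechStoneRemainder (α : Type u) [TopologicalSpace α] : Type u :=
  {p : StoneCech α // p ∉ Set.range (stoneCechUnit : α → StoneCech α)}

/-- `ω* = βω \ ω`, the Čech–Stone remainder of the countable discrete space `ω`. -/
abbrev OmegaStar : Type := CechStoneRemainder ℕ


section AuxOmega
open Filter Set Topology TopologicalSpace
namespace OmegaAux


/-- Nonprincipal ultrafilters on ℕ. -/
abbrev Om : Type := {u : Ultrafilter ℕ // u ∉ Set.range (pure : ℕ → Ultrafilter ℕ)}

lemma infinite_of_mem {u : Om} {A : Set ℕ} (h : A ∈ u.1) : A.Infinite := by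
  by_contra hf
  rw [Set.not_infinite] at hf
  obtain ⟨x, -, hx⟩ := Ultrafilter.eq_pure_of_finite_mem hf h
  exact u.2 ⟨x, hx.symm⟩

lemma nonprincipal_of_le_cofinite (u : Ultrafilter ℕ) (h : (u : Filter ℕ) ≤ cofinite)
    : u ∉ Set.range (pure : ℕ → Ultrafilter ℕ) := by
  rintro ⟨x, rfl⟩
  have h1 : ({x}ᶜ : Set ℕ) ∈ (pure x : Ultrafilter ℕ) := h (Set.finite_singleton x).compl_mem_cofinite
  simp at h1

def star (A : Set ℕ) : Set Om := {u | A ∈ u.1}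

lemma mem_star {u : Om} {A : Set ℕ} : u ∈ star A ↔ A ∈ u.1 := Iff.rfl

lemma star_mono {A B : Set ℕ} (h : A ⊆ B) : star A ⊆ star B :=
  fun _ hu => Filter.mem_of_superset hu h

lemma star_inter (A B : Set ℕ) : star (A ∩ B) = star A ∩ star B := by
  ext u; exact Filter.inter_mem_iff

lemma star_union (A B : Set ℕ) : star (A ∪ B) = star A ∪ star B := by
  ext u; exact Ultrafilter.union_mem_iff

lemma star_compl (A : Set ℕ) : star Aᶜ = (star A)ᶜ := by
  ext u; exact Ultrafilter.compl_mem_iff_notMem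

lemma star_empty : star ∅ = ∅ := by
  ext u; simp [star, Filter.empty_notMem]

lemma star_finite {A : Set ℕ} (h : A.Finite) : star A = ∅ := by
  ext u; simp only [Set.mem_empty_iff_false, iff_false]
  exact fun hu => (infinite_of_mem hu) h

lemma star_nonempty {A : Set ℕ} (h : A.Infinite) : (star A).Nonempty := by
  have hne : (cofinite ⊓ 𝓟 A).NeBot := h.cofinite_inf_principal_neBot
  set u := Ultrafilter.of (cofinite ⊓ 𝓟 A) with hu
  have hle := Ultrafilter.of_le (cofinite ⊓ 𝓟 A)
  have hA : A ∈ u := hle (inf_le_right (a := cofinite) (mem_principal_self A))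
  exact ⟨⟨u, nonprincipal_of_le_cofinite u (hle.trans inf_le_left)⟩, hA⟩

lemma infinite_of_star_nonempty {A : Set ℕ} (h : (star A).Nonempty) : A.Infinite := by
  obtain ⟨u, hu⟩ := h; exact infinite_of_mem hu

lemma star_diff_finite {A t : Set ℕ} (ht : t.Finite) : star (A \ t) = star A := by
  apply subset_antisymm (star_mono diff_subset)
  intro u hu
  have h1 : tᶜ ∈ u.1 := by
    rw [Ultrafilter.compl_mem_iff_notMem]
    exact fun hm => infinite_of_mem hm ht
  exact Filter.inter_mem hu h1

lemma star_subset_compl_iff {A B : Set ℕ} (h : A ∩ B = ∅) : star A ∩ star B = ∅ := by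
  rw [← star_inter, h, star_empty]

/-- Separation: two distinct ultrafilters differ on some set. -/
lemma exists_mem_compl_mem {u v : Om} (h : u ≠ v) : ∃ s, s ∈ u.1 ∧ sᶜ ∈ v.1 := by
  have h1 : u.1 ≠ v.1 := fun he => h (Subtype.ext he)
  have h2 : ¬ (∀ s : Set ℕ, s ∈ u.1 ↔ s ∈ v.1) := by
    intro hall
    exact h1 (Ultrafilter.coe_injective (Filter.ext hall))
  obtain ⟨s, hs⟩ := not_forall.mp h2
  rcases Classical.em (s ∈ u.1) with h3 | h3
  · refine ⟨s, h3, Ultrafilter.compl_mem_iff_notMem.mpr ?_⟩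
    intro hv; exact hs ⟨fun _ => hv, fun _ => h3⟩
  · have h5 : s ∈ v.1 := by
      by_contra h6
      exact hs ⟨fun h7 => (h3 h7).elim, fun h7 => (h6 h7).elim⟩
    refine ⟨sᶜ, Ultrafilter.compl_mem_iff_notMem.mpr h3, ?_⟩
    rwa [compl_compl]

lemma isClopen_star (A : Set ℕ) : IsClopen (star A) := by
  have h1 : star A = (Subtype.val : Om → Ultrafilter ℕ) ⁻¹' {v | A ∈ v} := rfl
  rw [h1]
  exact ⟨(ultrafilter_isClosed_basic A).preimage continuous_subtype_val,
    (ultrafilter_isOpen_basic A).preimage continuous_subtype_val⟩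

lemma singleton_basic (x : ℕ) : {v : Ultrafilter ℕ | ({x} : Set ℕ) ∈ v} = {pure x} := by
  ext v
  simp only [Set.mem_setOf_eq, Set.mem_singleton_iff]
  constructor
  · intro h
    obtain ⟨y, hy, h2⟩ := Ultrafilter.eq_pure_of_finite_mem (Set.finite_singleton x) h
    rwa [Set.mem_singleton_iff.mp hy] at h2
  · rintro rfl; exact singleton_mem_pure

lemma isOpen_range_pure : IsOpen (Set.range (pure : ℕ → Ultrafilter ℕ)) := by
  have : Set.range (pure : ℕ → Ultrafilter ℕ) = ⋃ x, {v : Ultrafilter ℕ | ({x} : Set ℕ) ∈ v} := by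
    simp only [singleton_basic]
    ext v; simp [eq_comm]
  rw [this]
  exact isOpen_iUnion fun x => ultrafilter_isOpen_basic _

instance : CompactSpace Om := by
  have h : IsCompact {u : Ultrafilter ℕ | u ∉ Set.range (pure : ℕ → Ultrafilter ℕ)} :=
    (isOpen_range_pure.isClosed_compl).isCompact
  exact isCompact_iff_compactSpace.mp h

/-- Basic neighborhoods in `Om`. -/
lemma exists_star_subset {u : Om} {O : Set Om} (hO : IsOpen O) (hu : u ∈ O) :
    ∃ A, A ∈ u.1 ∧ star A ⊆ O := by
  obtain ⟨O', hO', rfl⟩ := isOpen_induced_iff.mp hO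
  obtain ⟨t, ht, hut, htO⟩ := ultrafilterBasis_is_basis.exists_subset_of_mem_open (by exact hu) hO'
  obtain ⟨A, rfl⟩ := ht
  exact ⟨A, hut, fun v hv => htO hv⟩

/-- Every clopen subset of `Om` is of the form `star A`. -/
lemma exists_star_of_isClopen {V : Set Om} (hV : IsClopen V) : ∃ A, V = star A := by
  have hcomp : IsCompact V := hV.isClosed.isCompact
  have hcover : ∀ u : V, ∃ A, A ∈ (u : Om).1.1 ∧ star A ⊆ V := fun u =>
    exists_star_subset hV.isOpen u.2
  choose A hA hAV using hcover
  obtain ⟨F, hF⟩ := hcomp.elim_finite_subcover (fun u : V => star (A u))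
    (fun u => (isClopen_star (A u)).isOpen)
    (fun v hv => Set.mem_iUnion.mpr ⟨⟨v, hv⟩, hA ⟨v, hv⟩⟩)
  refine ⟨⋃ u ∈ F, A u, subset_antisymm ?_ ?_⟩
  · intro v hv
    obtain ⟨u, hu1, hu2⟩ := Set.mem_iUnion₂.mp (hF hv)
    exact Filter.mem_of_superset hu2 (Set.subset_biUnion_of_mem hu1)
  · intro v hv
    -- v.1 contains the finite union; some piece is in v by ultrafilter finite union
    have : ∃ u ∈ F, A u ∈ v.1 := by
      by_contra hall
      push_neg at hall
      have hc : (⋃ u ∈ F, A u)ᶜ ∈ v.1 := by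
        have : ∀ u ∈ F, (A u)ᶜ ∈ v.1 := fun u hu =>
          Ultrafilter.compl_mem_iff_notMem.mpr (hall u hu)
        have h2 : (⋂ u ∈ F, (A u)ᶜ) ∈ v.1 := (Filter.biInter_finset_mem F).mpr this
        rwa [← Set.compl_iUnion₂] at h2
      exact (Ultrafilter.compl_mem_iff_notMem.mp hc) hv
    obtain ⟨u, hu, hAu⟩ := this
    exact hAV u hAu


lemma exists_pair (k : Om ≃ₜ Om) (W : Set ℕ)
    (hinv : ∀ u : Om, u ∉ star W → k u ∉ star W)
    (u : Om) (hu : u ∉ star W) (hmv : k u ≠ u) :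
    ∃ c : Set ℕ, c.Infinite ∧ c ∩ W = ∅ ∧
      (∀ v ∈ star c, k v ∉ star c ∧ k v ∉ star W) := by
  obtain ⟨s, hsu, hsc⟩ := exists_mem_compl_mem (Ne.symm hmv)
  have hO : IsOpen ((⇑k) ⁻¹' (star sᶜ)) :=
    (isClopen_star sᶜ).isOpen.preimage k.continuous
  have huO : u ∈ (⇑k) ⁻¹' (star sᶜ) := hsc
  obtain ⟨t, htu, htO⟩ := exists_star_subset hO huO
  have hWc : Wᶜ ∈ u.1 := Ultrafilter.compl_mem_iff_notMem.mpr hu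
  have hcu : s ∩ t ∩ Wᶜ ∈ u.1 := Filter.inter_mem (Filter.inter_mem hsu htu) hWc
  refine ⟨s ∩ t ∩ Wᶜ, infinite_of_mem hcu, ?_, ?_⟩
  · ext x; simp only [Set.mem_inter_iff, Set.mem_empty_iff_false, iff_false, not_and]
    intro h hw; exact (h.2 hw)
  · intro v hv
    have hvt : v ∈ star t := star_mono (fun x hx => hx.1.2) hv
    have hks : k v ∈ star sᶜ := htO hvt
    have hns : s ∉ (k v).1 := Ultrafilter.compl_mem_iff_notMem.mp hks
    have hvW : v ∉ star W := by
      intro hW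
      have : W ∩ (s ∩ t ∩ Wᶜ) ∈ v.1 := Filter.inter_mem hW hv
      have he : W ∩ (s ∩ t ∩ Wᶜ) = ∅ := by
        ext x; simp only [Set.mem_inter_iff, Set.mem_compl_iff, Set.mem_empty_iff_false, iff_false]
        rintro ⟨h1, -, h3⟩; exact h3 h1
      rw [he] at this
      exact Filter.empty_notMem _ this
    refine ⟨fun hkc => hns (Filter.mem_of_superset hkc (fun x hx => hx.1.1)), hinv v hvW⟩

lemma exists_split {c : Set ℕ} (hc : c.Infinite) :
    ∃ c₁ c₂ : Set ℕ, c₁ ⊆ c ∧ c₂ ⊆ c ∧ c₁ ∩ c₂ = ∅ ∧ c₁.Infinite ∧ c₂.Infinite := by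
  have f := hc.natEmbedding
  refine ⟨Set.range (fun m => (f (2 * m) : ℕ)), Set.range (fun m => (f (2 * m + 1) : ℕ)),
    ?_, ?_, ?_, ?_, ?_⟩
  · rintro x ⟨m, rfl⟩; exact (f (2 * m)).2
  · rintro x ⟨m, rfl⟩; exact (f (2 * m + 1)).2
  · ext x
    simp only [Set.mem_inter_iff, Set.mem_range, Set.mem_empty_iff_false, iff_false, not_and]
    rintro ⟨a, ha⟩ ⟨b, hb⟩
    have : f (2 * a) = f (2 * b + 1) := Subtype.ext (ha.trans hb.symm)
    have := f.injective this
    omega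
  · apply Set.infinite_range_of_injective
    intro a b hab
    have : f (2 * a) = f (2 * b) := Subtype.ext hab
    have := f.injective this; omega
  · apply Set.infinite_range_of_injective
    intro a b hab
    have : f (2 * a + 1) = f (2 * b + 1) := Subtype.ext hab
    have := f.injective this; omega

variable (k : ℕ → (Om ≃ₜ Om))

def Moves (W : Set ℕ) (n : ℕ) : Prop := ∃ u : Om, u ∉ star W ∧ k n u ≠ u

lemma hinv_eventually (Hfix : ∀ A : Set ℕ, ∀ᶠ n in atTop, Set.MapsTo (k n) (star A) (star A))
    (W : Set ℕ) : ∀ᶠ n in atTop, ∀ u : Om, u ∉ star W → k n u ∉ star W := by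
  filter_upwards [Hfix Wᶜ] with n hn u hu
  have h1 : u ∈ star Wᶜ := by rw [star_compl]; exact hu
  have h2 := hn h1
  rw [star_compl] at h2; exact h2

lemma step (Hfix : ∀ A : Set ℕ, ∀ᶠ n in atTop, Set.MapsTo (k n) (star A) (star A))
    (W : Set ℕ) (hW : ∃ᶠ m in atTop, Moves k W m) (N : ℕ) :
    ∃ n c d, N < n ∧ c.Infinite ∧ (c ∪ d) ∩ W = ∅ ∧ c ∩ d = ∅ ∧
      (⇑(k n)) '' star c = star d ∧ (∃ᶠ m in atTop, Moves k (W ∪ (c ∪ d)) m) := by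
  have hEv := (hinv_eventually k Hfix W).and (eventually_gt_atTop N)
  obtain ⟨n, hMove, hinv, hN⟩ := (hW.and_eventually hEv).exists
  obtain ⟨u, hu, hmv⟩ := hMove
  obtain ⟨c₀, hc₀inf, hc₀W, hc₀prop⟩ := exists_pair (k n) W hinv u hu hmv
  obtain ⟨c₁, c₂, hsub₁, hsub₂, hdisj, hinf₁, hinf₂⟩ := exists_split hc₀inf
  -- representation of images as stars
  have him : ∀ c' : Set ℕ, IsClopen ((⇑(k n)) '' star c') := by
    intro c'
    have : (⇑(k n)) '' star c' = (⇑(k n).symm) ⁻¹' star c' := by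
      ext x
      simp only [Set.mem_image, Set.mem_preimage]
      constructor
      · rintro ⟨v, hv, rfl⟩; simpa using hv
      · intro h; exact ⟨(k n).symm x, h, by simp⟩
    rw [this]
    exact (isClopen_star c').preimage (k n).symm.continuous
  obtain ⟨d₁', hd₁'⟩ := exists_star_of_isClopen (him c₁)
  obtain ⟨d₂', hd₂'⟩ := exists_star_of_isClopen (him c₂)
  -- cleaning
  have hclean : ∀ c' d' : Set ℕ, c' ⊆ c₀ → (⇑(k n)) '' star c' = star d' →
      (⇑(k n)) '' star c' = star (d' \ (W ∪ c₀)) := by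
    intro c' d' hsub heq
    have hdis : star d' ∩ star (W ∪ c₀) = ∅ := by
      rw [← heq]
      apply Set.eq_empty_iff_forall_notMem.mpr
      rintro x ⟨⟨v, hv, rfl⟩, hx2⟩
      rw [star_union] at hx2
      have hvc₀ : v ∈ star c₀ := star_mono hsub hv
      rcases hx2 with h | h
      · exact (hc₀prop v hvc₀).2 h
      · exact (hc₀prop v hvc₀).1 h
    have hfin : (d' ∩ (W ∪ c₀)).Finite := by
      by_contra hinf
      obtain ⟨w, hw⟩ := star_nonempty hinf
      rw [star_inter] at hw
      rw [Set.eq_empty_iff_forall_notMem] at hdis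
      exact hdis w hw
    have hsets : d' \ (W ∪ c₀) = d' \ (d' ∩ (W ∪ c₀)) := by
      ext x
      constructor
      · rintro ⟨h1, h2⟩; exact ⟨h1, fun h3 => h2 h3.2⟩
      · rintro ⟨h1, h2⟩; exact ⟨h1, fun h3 => h2 ⟨h1, h3⟩⟩
    rw [heq, hsets, star_diff_finite hfin]
  have hcl₁ := hclean c₁ d₁' hsub₁ hd₁'
  have hcl₂ := hclean c₂ d₂' hsub₂ hd₂'
  set d₁ := d₁' \ (W ∪ c₀) with hd₁def
  set d₂ := d₂' \ (W ∪ c₀) with hd₂def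
  have hd₁W : d₁ ∩ (W ∪ c₀) = ∅ := by
    apply Set.eq_empty_iff_forall_notMem.mpr; rintro x ⟨h1, h2⟩; exact h1.2 h2
  have hd₂W : d₂ ∩ (W ∪ c₀) = ∅ := by
    apply Set.eq_empty_iff_forall_notMem.mpr; rintro x ⟨h1, h2⟩; exact h1.2 h2
  -- key dichotomy
  have key : (∃ᶠ m in atTop, Moves k (W ∪ (c₁ ∪ d₁)) m) ∨
      (∃ᶠ m in atTop, Moves k (W ∪ (c₂ ∪ d₂)) m) := by
    by_contra hboth
    push_neg at hboth
    obtain ⟨h1, h2⟩ := hboth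
    obtain ⟨m, hm, hn1, hn2⟩ := (hW.and_eventually (h1.and h2)).exists
    obtain ⟨u', hu', hmv'⟩ := hm
    have hin1 : u' ∈ star (W ∪ (c₁ ∪ d₁)) := by
      by_contra hx; exact hn1 ⟨u', hx, hmv'⟩
    have hin2 : u' ∈ star (W ∪ (c₂ ∪ d₂)) := by
      by_contra hx; exact hn2 ⟨u', hx, hmv'⟩
    rw [star_union, star_union] at hin1 hin2
    rcases hin1 with h | hin1
    · exact hu' h
    rcases hin2 with h | hin2
    · exact hu' h
    have hc₁d₂ : c₁ ∩ d₂ = ∅ := by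
      apply Set.eq_empty_iff_forall_notMem.mpr
      rintro x ⟨hx1, hx2⟩
      exact Set.eq_empty_iff_forall_notMem.mp hd₂W x ⟨hx2, Or.inr (hsub₁ hx1)⟩
    have hc₂d₁ : c₂ ∩ d₁ = ∅ := by
      apply Set.eq_empty_iff_forall_notMem.mpr
      rintro x ⟨hx1, hx2⟩
      exact Set.eq_empty_iff_forall_notMem.mp hd₁W x ⟨hx2, Or.inr (hsub₂ hx1)⟩
    have hdd : star d₁ ∩ star d₂ = ∅ := by
      rw [← hcl₁, ← hcl₂, ← Set.image_inter (k n).injective, ← star_inter, hdisj,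
        star_empty, Set.image_empty]
    rcases hin1 with h1' | h1' <;> rcases hin2 with h2' | h2'
    · have : u' ∈ star (c₁ ∩ c₂) := by rw [star_inter]; exact ⟨h1', h2'⟩
      rw [hdisj, star_empty] at this; exact this
    · have : u' ∈ star (c₁ ∩ d₂) := by rw [star_inter]; exact ⟨h1', h2'⟩
      rw [hc₁d₂, star_empty] at this; exact this
    · have : u' ∈ star (c₂ ∩ d₁) := by rw [star_inter]; exact ⟨h2', h1'⟩
      rw [hc₂d₁, star_empty] at this; exact this
    · exact Set.eq_empty_iff_forall_notMem.mp hdd u' ⟨h1', h2'⟩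
  have hcW : ∀ c' : Set ℕ, c' ⊆ c₀ → c' ∩ W = ∅ := by
    intro c' hsub
    apply Set.eq_empty_iff_forall_notMem.mpr
    rintro x ⟨hx1, hx2⟩
    exact Set.eq_empty_iff_forall_notMem.mp hc₀W x ⟨hsub hx1, hx2⟩
  rcases key with hk | hk
  · refine ⟨n, c₁, d₁, hN, hinf₁, ?_, ?_, hcl₁, hk⟩
    · rw [Set.union_inter_distrib_right, hcW c₁ hsub₁]
      simp only [Set.empty_union]
      apply Set.eq_empty_iff_forall_notMem.mpr
      rintro x ⟨hx1, hx2⟩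
      exact Set.eq_empty_iff_forall_notMem.mp hd₁W x ⟨hx1, Or.inl hx2⟩
    · apply Set.eq_empty_iff_forall_notMem.mpr
      rintro x ⟨hx1, hx2⟩
      exact Set.eq_empty_iff_forall_notMem.mp hd₁W x ⟨hx2, Or.inr (hsub₁ hx1)⟩
  · refine ⟨n, c₂, d₂, hN, hinf₂, ?_, ?_, hcl₂, hk⟩
    · rw [Set.union_inter_distrib_right, hcW c₂ hsub₂]
      simp only [Set.empty_union]
      apply Set.eq_empty_iff_forall_notMem.mpr
      rintro x ⟨hx1, hx2⟩
      exact Set.eq_empty_iff_forall_notMem.mp hd₂W x ⟨hx1, Or.inl hx2⟩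
    · apply Set.eq_empty_iff_forall_notMem.mpr
      rintro x ⟨hx1, hx2⟩
      exact Set.eq_empty_iff_forall_notMem.mp hd₂W x ⟨hx2, Or.inr (hsub₂ hx1)⟩


structure Stage where
  n : ℕ
  c : Set ℕ
  d : Set ℕ
  W : Set ℕ

def Inv (k : ℕ → (Om ≃ₜ Om)) (s : Stage) : Prop := ∃ᶠ m in Filter.atTop, Moves k s.W m

def Pr (k : ℕ → (Om ≃ₜ Om)) (s : Stage) : Prop :=
  s.c.Infinite ∧ s.c ∩ s.d = ∅ ∧ (⇑(k s.n)) '' star s.c = star s.d ∧ s.c ∪ s.d ⊆ s.W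

def Rel (s t : Stage) : Prop := s.n < t.n ∧ (t.c ∪ t.d) ∩ s.W = ∅ ∧ t.W = s.W ∪ (t.c ∪ t.d)

lemma step_stage (k : ℕ → (Om ≃ₜ Om))
    (Hfix : ∀ A : Set ℕ, ∀ᶠ n in Filter.atTop, Set.MapsTo (k n) (star A) (star A))
    (s : Stage) (hs : Inv k s) : ∃ t : Stage, Inv k t ∧ Pr k t ∧ Rel s t := by
  obtain ⟨n, c, d, hN, hinf, hcdW, hcd, heq, hfr⟩ := step k Hfix s.W hs s.n
  exact ⟨⟨n, c, d, s.W ∪ (c ∪ d)⟩, hfr, ⟨hinf, hcd, heq, Set.subset_union_right⟩,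
    hN, hcdW, rfl⟩

lemma base_inv (k : ℕ → (Om ≃ₜ Om)) (Hne : ∀ m, ∃ u : Om, k m u ≠ u) :
    Inv k ⟨0, ∅, ∅, ∅⟩ := by
  apply Filter.Eventually.frequently
  apply Filter.Eventually.of_forall
  intro m
  obtain ⟨u, hu⟩ := Hne m
  exact ⟨u, by rw [star_empty]; exact Set.notMem_empty u, hu⟩

noncomputable def seq (k : ℕ → (Om ≃ₜ Om)) (Hne : ∀ m, ∃ u : Om, k m u ≠ u)
    (Hfix : ∀ A : Set ℕ, ∀ᶠ n in Filter.atTop, Set.MapsTo (k n) (star A) (star A)) :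
    ℕ → {s : Stage // Inv k s} := fun j =>
  Nat.rec ⟨⟨0, ∅, ∅, ∅⟩, base_inv k Hne⟩
    (fun _ p => ⟨(step_stage k Hfix p.1 p.2).choose,
      (step_stage k Hfix p.1 p.2).choose_spec.1⟩) j

variable {k : ℕ → (Om ≃ₜ Om)} {Hne : ∀ m, ∃ u : Om, k m u ≠ u}
  {Hfix : ∀ A : Set ℕ, ∀ᶠ n in Filter.atTop, Set.MapsTo (k n) (star A) (star A)}

lemma seq_pr (j : ℕ) : Pr k (seq k Hne Hfix (j + 1)).1 :=
  (step_stage k Hfix (seq k Hne Hfix j).1 (seq k Hne Hfix j).2).choose_spec.2.1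

lemma seq_rel (j : ℕ) : Rel (seq k Hne Hfix j).1 (seq k Hne Hfix (j + 1)).1 :=
  (step_stage k Hfix (seq k Hne Hfix j).1 (seq k Hne Hfix j).2).choose_spec.2.2

lemma seq_W_mono : ∀ {i j : ℕ}, i ≤ j →
    (seq k Hne Hfix i).1.W ⊆ (seq k Hne Hfix j).1.W := by
  intro i j hij
  induction j, hij using Nat.le_induction with
  | base => exact subset_rfl
  | succ j hij ih =>
    refine ih.trans ?_
    rw [(seq_rel (k := k) (Hne := Hne) (Hfix := Hfix) j).2.2]
    exact Set.subset_union_left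

lemma seq_n_ge (j : ℕ) : j ≤ (seq k Hne Hfix j).1.n := by
  induction j with
  | zero => exact Nat.zero_le _
  | succ j ih =>
    exact Nat.lt_of_le_of_lt ih (seq_rel (k := k) (Hne := Hne) (Hfix := Hfix) j).1

theorem main_aux (k : ℕ → (Om ≃ₜ Om)) (Hne : ∀ m, ∃ u : Om, k m u ≠ u)
    (Hfix : ∀ A : Set ℕ, ∀ᶠ n in Filter.atTop, Set.MapsTo (k n) (star A) (star A)) :
    False := by
  set S := seq k Hne Hfix with hS
  have hpr : ∀ j : ℕ, Pr k (S (j + 1)).1 := fun j => seq_pr (k := k) (Hne := Hne) (Hfix := Hfix) j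
  have hrel : ∀ j : ℕ, Rel (S j).1 (S (j + 1)).1 := fun j => seq_rel (k := k) (Hne := Hne) (Hfix := Hfix) j
  have hmono : ∀ {i j : ℕ}, i ≤ j → (S i).1.W ⊆ (S j).1.W :=
    fun hij => seq_W_mono (k := k) (Hne := Hne) (Hfix := Hfix) hij
  have hnge : ∀ j : ℕ, j ≤ (S j).1.n := fun j => seq_n_ge (k := k) (Hne := Hne) (Hfix := Hfix) j
  have hBd : ∀ j : ℕ, (⋃ i, (S (i + 1)).1.c) ∩ (S (j + 1)).1.d = ∅ := by
    intro j
    apply Set.eq_empty_iff_forall_notMem.mpr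
    rintro x ⟨hx1, hx2⟩
    obtain ⟨i, hi⟩ := Set.mem_iUnion.mp hx1
    rcases lt_trichotomy i j with hij | rfl | hij
    · have h1 : x ∈ (S (i + 1)).1.W := (hpr i).2.2.2 (Or.inl hi)
      have h2 : x ∈ (S j).1.W := hmono (by omega) h1
      exact Set.eq_empty_iff_forall_notMem.mp (hrel j).2.1 x ⟨Or.inr hx2, h2⟩
    · exact Set.eq_empty_iff_forall_notMem.mp (hpr i).2.1 x ⟨hi, hx2⟩
    · have h1 : x ∈ (S (j + 1)).1.W := (hpr j).2.2.2 (Or.inr hx2)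
      have h2 : x ∈ (S i).1.W := hmono (by omega) h1
      exact Set.eq_empty_iff_forall_notMem.mp (hrel i).2.1 x ⟨Or.inl hi, h2⟩
  set B := ⋃ i, (S (i + 1)).1.c with hB
  obtain ⟨M, hM⟩ := Filter.eventually_atTop.mp (Hfix B)
  have hn : M ≤ (S (M + 1)).1.n := le_trans (by omega) (hnge (M + 1))
  obtain ⟨u, hu⟩ := star_nonempty (hpr M).1
  have huB : u ∈ star B := star_mono (Set.subset_iUnion (fun i => (S (i + 1)).1.c) M) hu
  have h1 : (k (S (M + 1)).1.n) u ∈ star (S (M + 1)).1.d := by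
    rw [← (hpr M).2.2.1]
    exact Set.mem_image_of_mem _ hu
  have h2 : (k (S (M + 1)).1.n) u ∈ star B := hM _ hn huB
  have h3 : (k (S (M + 1)).1.n) u ∈ star (B ∩ (S (M + 1)).1.d) := by
    rw [star_inter]; exact ⟨h2, h1⟩
  rw [hBd M, star_empty] at h3
  exact h3


noncomputable def qmap : Ultrafilter ℕ → StoneCech ℕ :=
  Ultrafilter.extend (stoneCechUnit : ℕ → StoneCech ℕ)

lemma continuous_pure_nat : Continuous (pure : ℕ → Ultrafilter ℕ) :=
  continuous_of_discreteTopology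

noncomputable def emap : StoneCech ℕ → Ultrafilter ℕ := stoneCechExtend continuous_pure_nat

lemma qmap_pure (x : ℕ) : qmap (pure x) = stoneCechUnit x :=
  congrFun (ultrafilter_extend_extends (stoneCechUnit : ℕ → StoneCech ℕ)) x

lemma emap_unit (x : ℕ) : emap (stoneCechUnit x) = pure x :=
  congrFun (stoneCechExtend_extends continuous_pure_nat) x

lemma emap_qmap : emap ∘ qmap = id := by
  apply denseRange_pure.equalizer
    ((continuous_stoneCechExtend _).comp (continuous_ultrafilter_extend _)) continuous_id
  funext x
  simp only [Function.comp_apply, id_eq]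
  rw [show Ultrafilter.extend stoneCechUnit (pure x) = stoneCechUnit x from qmap_pure x,
    show stoneCechExtend continuous_pure_nat (stoneCechUnit x) = pure x from emap_unit x]

lemma qmap_emap : qmap ∘ emap = id := by
  apply stoneCech_hom_ext ((continuous_ultrafilter_extend _).comp (continuous_stoneCechExtend _))
    continuous_id
  funext x
  simp only [Function.comp_apply, id_eq]
  rw [show stoneCechExtend continuous_pure_nat (stoneCechUnit x) = pure x from emap_unit x,
    show Ultrafilter.extend stoneCechUnit (pure x) = stoneCechUnit x from qmap_pure x]

noncomputable def uhomeo : Ultrafilter ℕ ≃ₜ StoneCech ℕ where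
  toFun := qmap
  invFun := emap
  left_inv := fun u => congrFun emap_qmap u
  right_inv := fun p => congrFun qmap_emap p
  continuous_toFun := continuous_ultrafilter_extend _
  continuous_invFun := continuous_stoneCechExtend _

lemma uhomeo_range_iff (u : Ultrafilter ℕ) :
    u ∉ Set.range (pure : ℕ → Ultrafilter ℕ) ↔
      uhomeo u ∉ Set.range (stoneCechUnit : ℕ → StoneCech ℕ) := by
  apply not_congr
  constructor
  · rintro ⟨x, rfl⟩; exact ⟨x, (qmap_pure x).symm⟩
  · rintro ⟨x, hx⟩
    refine ⟨x, uhomeo.injective ?_⟩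
    show uhomeo (pure x) = uhomeo u
    rw [← hx]
    exact qmap_pure x

noncomputable def omHomeo : Om ≃ₜ OmegaStar := uhomeo.subtype uhomeo_range_iff

end OmegaAux
end AuxOmega

namespace OmegaAux

def sgl (n : ℕ) : ℕ → ZMod 2 := fun j => if j = n then 1 else 0

lemma tendsto_single : Filter.Tendsto (fun n => Multiplicative.ofAdd (sgl n))
    Filter.atTop (nhds (1 : Multiplicative (ℕ → ZMod 2))) := by
  have h0 : Filter.Tendsto sgl Filter.atTop (nhds (0 : ℕ → ZMod 2)) := by
    rw [tendsto_pi_nhds]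
    intro i
    have heq : (fun _ : ℕ => (0 : ZMod 2)) =ᶠ[Filter.atTop] (fun n => sgl n i) :=
      Filter.eventually_atTop.mpr
        ⟨i + 1, fun n hn => by simp only [sgl]; rw [if_neg (by omega)]⟩
    exact Filter.Tendsto.congr' heq tendsto_const_nhds
  have h2 := (continuous_ofAdd.tendsto (0 : ℕ → ZMod 2)).comp h0
  rwa [ofAdd_zero] at h2

lemma single_ne_one (n : ℕ) :
    Multiplicative.ofAdd (sgl n) ≠ (1 : Multiplicative (ℕ → ZMod 2)) := by
  intro h
  have h2 : sgl n = (0 : ℕ → ZMod 2) := by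
    have := congrArg Multiplicative.toAdd h
    simpa using this
  have h3 : (1 : ZMod 2) = 0 := by simpa [sgl] using congrFun h2 n
  exact absurd h3 (by decide)

end OmegaAux

/-- The topological group `2^ω` (the product of countably many copies
of the discrete two-element group) is not topologically isomorphic to any subgroup of
`H(ω*)`: there is no group homomorphism from it to `H(ω*)` that is a topological
embedding. -/
theorem cantorGroup_not_subgroup_homeoOmegaStar :
    ¬ ∃ φ : Multiplicative (ℕ → ZMod 2) →* (OmegaStar ≃ₜ OmegaStar),
        Topology.IsEmbedding ⇑φ := by
  rintro ⟨φ, hφ⟩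
  classical
  set X := OmegaStar with hX
  let Θ : OmegaAux.Om ≃ₜ OmegaStar := OmegaAux.omHomeo
  set g : ℕ → Multiplicative (ℕ → ZMod 2) :=
    (fun n => Multiplicative.ofAdd (OmegaAux.sgl n)) with hgdef
  let k : ℕ → (OmegaAux.Om ≃ₜ OmegaAux.Om) := fun n => (Θ.trans (φ (g n))).trans Θ.symm
  have hk_apply : ∀ n u, k n u = Θ.symm ((φ (g n)) (Θ u)) := fun n u => rfl
  -- every k n moves a point
  have Hne : ∀ m, ∃ u : OmegaAux.Om, k m u ≠ u := by
    intro m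
    by_contra hall
    push_neg at hall
    have hone : φ (g m) = 1 := by
      apply Homeomorph.ext
      intro x
      have h2 := hall (Θ.symm x)
      rw [hk_apply, Θ.apply_symm_apply] at h2
      have h3 := congrArg Θ h2
      rw [Θ.apply_symm_apply, Θ.apply_symm_apply] at h3
      exact h3
    have := hφ.injective (hone.trans (map_one φ).symm)
    exact OmegaAux.single_ne_one m this
  -- eventual invariance of clopen sets
  have Hfix : ∀ A : Set ℕ, ∀ᶠ n in Filter.atTop,
      Set.MapsTo (k n) (OmegaAux.star A) (OmegaAux.star A) := by
    intro A
    set U : Set X := Θ '' OmegaAux.star A with hU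
    have hUo : IsOpen U := Θ.isOpenMap _ (OmegaAux.isClopen_star A).isOpen
    have hUc : IsCompact U :=
      ((OmegaAux.isClopen_star A).isClosed.isCompact).image Θ.continuous
    have h1 : Filter.Tendsto (fun n => φ (g n)) Filter.atTop (nhds (1 : X ≃ₜ X)) := by
      have := (hφ.continuous.tendsto (1 : Multiplicative (ℕ → ZMod 2))).comp
        OmegaAux.tendsto_single
      rwa [map_one] at this
    have h2 : Continuous (fun h : X ≃ₜ X => (h : C(X, X))) := continuous_induced_dom
    have hten : Filter.Tendsto (fun n => ((φ (g n) : X ≃ₜ X) : C(X, X))) Filter.atTop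
        (nhds ((1 : X ≃ₜ X) : C(X, X))) := (h2.tendsto _).comp h1
    have hopen : IsOpen {f : C(X, X) | Set.MapsTo f U U} :=
      ContinuousMap.isOpen_setOf_mapsTo hUc hUo
    have hmem : ((1 : X ≃ₜ X) : C(X, X)) ∈ {f : C(X, X) | Set.MapsTo f U U} :=
      fun x hx => hx
    filter_upwards [hten.eventually (hopen.mem_nhds hmem)] with n hn
    intro u hu
    have h3 : (φ (g n)) (Θ u) ∈ U := hn (Set.mem_image_of_mem _ hu)
    obtain ⟨v, hv, hveq⟩ := h3
    rw [OmegaAux.mem_star, hk_apply, ← hveq, Θ.symm_apply_apply]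
    exact hv
  exact OmegaAux.main_aux k Hne Hfix
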